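/- arXiv:1605.04459 — 2 statements merged into one kernel-verified Lean document; each statement's English description precedes it below -/
import Mathlib

section
/- Let $\mathbf{k}$ be a field of characteristic $2$, $V$ a $\mathbf{k}$-vector space with basis, and $k > 1$. Define $Q$ on sums of distinct basis pure tensors by $Q(v_1 + \cdots + v_r) = \sum_{1 \leq i < j \leq r} v_i \wedge v_j$, where each $v_i$ is a wedge of $k$ distinct basis vectors. Then $Q$ vanishes on every pure tensor $w_1 \wedge \cdots \wedge w_k$ (not just those formed from basis vectors). -/
open ExteriorAlgebra

/-- Over a field of characteristic 2, let `V` have a basis `b` and let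
`k > 1`.  Suppose `Q : ⋀ᵏV → ⋀²ᵏV` satisfies `Q(c•v) = c²•Q(v)`,
`Q(v+w) = Q(v) + Q(w) + v ∧ w`, and `Q` vanishes on all wedges of `k` distinct basis
vectors (these conditions pin down the `Q` defined on sums
`v₁ + ⋯ + v_r` of distinct basis pure tensors by `Q(v₁+⋯+v_r) = ∑_{i<j} vᵢ ∧ vⱼ`).
Then `Q` vanishes on every pure tensor `w₁ ∧ ⋯ ∧ w_k`. -/
theorem stmt_8 (k : Type*) [Field k] (hchar : ringChar k = 2)
    (V : Type*) [AddCommGroup V] [Module k V]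
    (ι : Type*) (b : Module.Basis ι k V) (n : ℕ) (hn : 1 < n)
    (Q : (⋀[k]^n V) → ExteriorAlgebra k V)
    (hquad : ∀ (c : k) (v), Q (c • v) = c ^ 2 • Q v)
    (hpolar : ∀ v w, Q (v + w)
        = Q v + Q w + (v : ExteriorAlgebra k V) * (w : ExteriorAlgebra k V))
    (hbasis : ∀ s : Fin n → ι, Function.Injective s →
        Q ⟨ιMulti k n (fun i => b (s i)),
            ιMulti_range k n (Set.mem_range_self _)⟩ = 0) :
    ∀ f : Fin n → V, Q ⟨ιMulti k n f, ιMulti_range k n (Set.mem_range_self f)⟩ = 0 := by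
  classical
  have h2 : (2 : k) = 0 := by
    have h := (ringChar.spec k 2).mpr (by rw [hchar])
    exact_mod_cast h
  -- in char 2, additive inverses are trivial in the exterior algebra
  have hneg : ∀ a : ExteriorAlgebra k V, -a = a := by
    intro a
    have h : a + a = 0 := by
      rw [← two_smul k a, h2, zero_smul]
    exact neg_eq_of_add_eq_zero_left h
  -- in char 2, the exterior algebra is commutative
  have hιcomm : ∀ v w : V, ExteriorAlgebra.ι k v * ExteriorAlgebra.ι k w
      = ExteriorAlgebra.ι k w * ExteriorAlgebra.ι k v := by
    intro v w
    have h := ExteriorAlgebra.ι_add_mul_swap (R := k) v w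
    have := neg_eq_of_add_eq_zero_left h
    rw [hneg] at this
    exact this.symm
  have hιcommall : ∀ (v : V) (a : ExteriorAlgebra k V),
      ExteriorAlgebra.ι k v * a = a * ExteriorAlgebra.ι k v := by
    intro v a
    induction a using ExteriorAlgebra.induction with
    | algebraMap r => exact (Algebra.commutes r _).symm
    | ι w => exact hιcomm v w
    | mul x y hx hy => rw [← mul_assoc, hx, mul_assoc, hy, mul_assoc]
    | add x y hx hy => rw [mul_add, add_mul, hx, hy]
  have hcomm : ∀ a c : ExteriorAlgebra k V, a * c = c * a := by
    intro a c
    induction a using ExteriorAlgebra.induction with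
    | algebraMap r => exact Algebra.commutes r c
    | ι v => exact hιcommall v c
    | mul x y hx hy => rw [mul_assoc, hy, ← mul_assoc, hx, mul_assoc]
    | add x y hx hy => rw [add_mul, mul_add, hx, hy]
  letI : CommRing (ExteriorAlgebra k V) :=
    { (inferInstance : Ring (ExteriorAlgebra k V)) with mul_comm := hcomm }
  -- cross terms of pure tensors sharing a common factor vanish
  have hcross : ∀ (x y : Fin n → V) (j : Fin n), x j = y j →
      ιMulti k n x * ιMulti k n y = (0 : ExteriorAlgebra k V) := by
    intro x y j hxy
    rw [ιMulti_apply, ιMulti_apply, List.prod_ofFn, List.prod_ofFn,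
      ← Finset.mul_prod_erase _ _ (Finset.mem_univ j),
      ← Finset.mul_prod_erase _ _ (Finset.mem_univ j),
      mul_mul_mul_comm, hxy, ExteriorAlgebra.ι_sq_zero, zero_mul]
  -- Q 0 = 0
  have hQ0 : Q 0 = 0 := by
    have h := hquad 0 0
    simpa using h
  -- Q vanishes on elements ⟨ιMulti f, _⟩ when ιMulti f = 0
  have hPzero : ∀ f : Fin n → V, ιMulti k n f = 0 →
      Q ⟨ιMulti k n f, ιMulti_range k n (Set.mem_range_self f)⟩ = 0 := by
    intro f h
    have e : (⟨ιMulti k n f, ιMulti_range k n (Set.mem_range_self f)⟩ : ⋀[k]^n V) = 0 :=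
      Subtype.ext h
    rw [e, hQ0]
  -- base case: all coordinates zero or basis vectors
  have hbase : ∀ f : Fin n → V, (∀ i, f i = 0 ∨ ∃ j, f i = b j) →
      Q ⟨ιMulti k n f, ιMulti_range k n (Set.mem_range_self f)⟩ = 0 := by
    intro f hf
    by_cases hz : ∃ i, f i = 0
    · obtain ⟨i, hi⟩ := hz
      exact hPzero f ((ιMulti k n).map_coord_zero i hi)
    · push_neg at hz
      have hb : ∀ i, ∃ j, f i = b j := fun i => (hf i).resolve_left (hz i)
      choose s hs using hb
      by_cases hinj : Function.Injective s
      · have heq : f = fun i => b (s i) := funext hs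
        subst heq
        exact hbasis s hinj
      · rw [Function.Injective] at hinj
        push_neg at hinj
        obtain ⟨i1, i2, he, hne⟩ := hinj
        have : f i1 = f i2 := by rw [hs i1, hs i2, he]
        exact hPzero f ((ιMulti k n).map_eq_zero_of_eq f this
          (fun h => hne (by rw [h])))
  -- main induction: relax the constraint on coordinates below m
  have main : ∀ m : ℕ, ∀ f : Fin n → V,
      (∀ i : Fin n, m ≤ (i : ℕ) → f i = 0 ∨ ∃ j, f i = b j) →
      Q ⟨ιMulti k n f, ιMulti_range k n (Set.mem_range_self f)⟩ = 0 := by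
    intro m
    induction m with
    | zero => exact fun f hf => hbase f (fun i => hf i (Nat.zero_le _))
    | succ m ih =>
      intro f hf
      by_cases hm : m < n
      · set i0 : Fin n := ⟨m, hm⟩ with hi0
        -- pick another index j0 ≠ i0
        obtain ⟨j0, hj0⟩ : ∃ j0 : Fin n, j0 ≠ i0 := by
          rcases Nat.lt_or_ge 0 m with h | h
          · exact ⟨⟨0, by omega⟩, fun h' => by
              have := congrArg Fin.val h'; simp [hi0] at this; omega⟩
          · exact ⟨⟨1, hn⟩, fun h' => by
              have := congrArg Fin.val h'; simp [hi0] at this; omega⟩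
        have key : ∀ x : V,
            Q ⟨ιMulti k n (Function.update f i0 x),
              ιMulti_range k n (Set.mem_range_self _)⟩ = 0 := by
          intro x
          have hx : x ∈ Submodule.span k (Set.range b) := by
            rw [b.span_eq]; trivial
          induction hx using Submodule.span_induction with
          | mem z hz =>
            obtain ⟨j, rfl⟩ := hz
            refine ih (Function.update f i0 (b j)) ?_
            intro i hi
            by_cases hii : i = i0
            · subst hii
              rw [Function.update_self]
              exact Or.inr ⟨j, rfl⟩
            · rw [Function.update_of_ne hii]
              refine hf i ?_
              have hvne : (i : ℕ) ≠ m := fun h =>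
                hii (Fin.ext (by rw [h, hi0]))
              omega
          | zero =>
            exact hPzero _ ((ιMulti k n).map_coord_zero i0 (Function.update_self i0 0 f))
          | add u v hu hv hQu hQv =>
            have e : ιMulti k n (Function.update f i0 (u + v))
                = ιMulti k n (Function.update f i0 u) + ιMulti k n (Function.update f i0 v) :=
              (ιMulti k n).map_update_add f i0 u v
            have esub : (⟨ιMulti k n (Function.update f i0 (u + v)),
                ιMulti_range k n (Set.mem_range_self _)⟩ : ⋀[k]^n V)
                = ⟨ιMulti k n (Function.update f i0 u), ιMulti_range k n (Set.mem_range_self _)⟩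
                + ⟨ιMulti k n (Function.update f i0 v),
                    ιMulti_range k n (Set.mem_range_self _)⟩ :=
              Subtype.ext e
            rw [esub, hpolar, hQu, hQv]
            have hc : ιMulti k n (Function.update f i0 u) * ιMulti k n (Function.update f i0 v)
                = 0 := by
              refine hcross _ _ j0 ?_
              rw [Function.update_of_ne hj0, Function.update_of_ne hj0]
            simpa using hc
          | smul c u hu hQu =>
            have e : ιMulti k n (Function.update f i0 (c • u))
                = c • ιMulti k n (Function.update f i0 u) :=
              (ιMulti k n).map_update_smul f i0 c u
            have esub : (⟨ιMulti k n (Function.update f i0 (c • u)),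
                ιMulti_range k n (Set.mem_range_self _)⟩ : ⋀[k]^n V)
                = c • ⟨ιMulti k n (Function.update f i0 u),
                    ιMulti_range k n (Set.mem_range_self _)⟩ :=
              Subtype.ext e
            rw [esub, hquad, hQu, smul_zero]
        have := key (f i0)
        rw [Function.update_eq_self] at this
        exact this
      · exact ih f (fun i hi => absurd (lt_of_le_of_lt hi i.isLt) (by omega))
  intro f
  exact main n f (fun i hi => absurd (lt_of_le_of_lt hi i.isLt) (lt_irrefl n))
end

section
/- Let $V_8$ be an $8$-dimensional vector space over a field $\mathbf{k}$, let $U \subset V_8$ be a $5$-dimensional subspace, and let $W = V_8/U$. Consider the element $\gamma' = u_1 \wedge u_2 \wedge u_3 \in \bigwedge^3 W^*$ where $u_1, u_2, u_3$ is a basis of $W^*$, viewed as an element of $\bigwedge^3 V_8^*$. Then for $\gamma \in \bigwedge^3 V_8$, the bracket $[\gamma, \gamma']$ in the graded Lie algebra structure (with bracket landing in $\mathfrak{gl}(V_8)$) vanishes if and only if $\gamma$ lies in the subspace $\bigwedge^3 U + \bigwedge^2 U \wedge V_8$ (i.e., the image of $\bigwedge^3 U \oplus \bigwedge^2 U \otimes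 V_8$ in $\bigwedge^3 V_8$). -/
open ExteriorAlgebra Module

variable {k : Type*} [Field k] {V : Type*} [AddCommGroup V] [Module k V]

/-- The alternating 3-form `(v₁,v₂,v₃) ↦ det (uᵢ(vⱼ))` on `V` attached to a triple of
linear functionals `u₀, u₁, u₂`; this is the pairing with `u₀ ∧ u₁ ∧ u₂ ∈ ⋀³V^*`. -/
noncomputable def detForm (u : Fin 3 → Dual k V) : V [⋀^Fin 3]→ₗ[k] k :=
  Matrix.detRowAlternating.compLinearMap (LinearMap.pi u)

/-- The alternating 3-form `(v₁,v₂,v₃) ↦ ⟨Av₁∧v₂∧v₃ + v₁∧Av₂∧v₃ + v₁∧v₂∧Av₃,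
u₀∧u₁∧u₂⟩`, i.e. the pairing of the derivation action of `A ∈ gl(V)` on `⋀³V` with
`u₀ ∧ u₁ ∧ u₂ ∈ ⋀³V^*`. -/
noncomputable def derivPairingForm (u : Fin 3 → Dual k V) (A : Module.End k V) :
    V [⋀^Fin 3]→ₗ[k] k where
  toMultilinearMap :=
    ∑ l : Fin 3, (detForm u).toMultilinearMap.compLinearMap
      (fun m => if m = l then (A : V →ₗ[k] V) else LinearMap.id)
  map_eq_zero_of_eq' := by
    intro v i j hv hij
    show (∑ l : Fin 3, (detForm u).toMultilinearMap.compLinearMap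
      (fun m => if m = l then (A : V →ₗ[k] V) else LinearMap.id)) v = 0
    have key : ∀ l : Fin 3,
        ((detForm u).toMultilinearMap.compLinearMap
          (fun m => if m = l then (A : V →ₗ[k] V) else LinearMap.id)) v
        = detForm u (Function.update v l (A (v l))) := by
      intro l
      have harg : (fun c => (if c = l then (A : V →ₗ[k] V) else LinearMap.id) (v c))
          = Function.update v l (A (v l)) := by
        funext c
        by_cases hc : c = l
        · subst hc; simp
        · simp [hc, Function.update_of_ne hc]
      rw [MultilinearMap.compLinearMap_apply]
      show detForm u (fun c => (if c = l then (A : V →ₗ[k] V) else LinearMap.id) (v c)) = _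
      rw [harg]
    rw [MultilinearMap.sum_apply]
    have hji : j ≠ i := Ne.symm hij
    calc ∑ l : Fin 3, ((detForm u).toMultilinearMap.compLinearMap
          (fun m => if m = l then (A : V →ₗ[k] V) else LinearMap.id)) v
        = ∑ l : Fin 3, detForm u (Function.update v l (A (v l))) :=
          Finset.sum_congr rfl (fun l _ => key l)
      _ = 0 := by
          have hsplit : (Finset.univ : Finset (Fin 3))
              = insert i (insert j (Finset.univ \ {i, j})) := by
            ext c
            simp only [Finset.mem_insert, Finset.mem_sdiff, Finset.mem_univ, true_and,
              Finset.mem_singleton]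
            tauto
          rw [hsplit, Finset.sum_insert (by simp [hij]), Finset.sum_insert (by simp)]
          have hrest : ∑ l ∈ Finset.univ \ {i, j},
              detForm u (Function.update v l (A (v l))) = 0 := by
            apply Finset.sum_eq_zero
            intro l hl
            simp only [Finset.mem_sdiff, Finset.mem_insert, Finset.mem_singleton,
              Finset.mem_univ, true_and] at hl
            push_neg at hl
            apply AlternatingMap.map_eq_zero_of_eq _ _ (i := i) (j := j) _ hij
            rw [Function.update_of_ne (fun h => hl.1 h.symm),
              Function.update_of_ne (fun h => hl.2 h.symm)]
            exact hv
          rw [hrest, add_zero]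
          have hswap : Function.update v j (A (v j))
              = (Function.update v i (A (v i))) ∘ (Equiv.swap i j) := by
            funext c
            by_cases hcj : c = j
            · subst hcj
              show Function.update v c (A (v c)) c
                  = Function.update v i (A (v i)) (Equiv.swap i c c)
              rw [Equiv.swap_apply_right, Function.update_self, Function.update_self, hv]
            · by_cases hci : c = i
              · subst hci
                show Function.update v j (A (v j)) c
                    = Function.update v c (A (v c)) (Equiv.swap c j c)
                rw [Equiv.swap_apply_left, Function.update_of_ne hij,
                  Function.update_of_ne hji, hv]
              · show Function.update v j (A (v j)) c
                    = Function.update v i (A (v i)) (Equiv.swap i j c)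
                rw [Equiv.swap_apply_of_ne_of_ne hci hcj, Function.update_of_ne hcj,
                  Function.update_of_ne hci]
          rw [hswap, AlternatingMap.map_swap _ _ hij]
          ring

/-- The linear functional `γ ↦ ⟨A·γ, u₀∧u₁∧u₂⟩` on the exterior algebra (supported in
degree 3), where `A·γ` is the derivation action of `A ∈ gl(V) = 𝔤₀` on `⋀³V = 𝔤₁`.
Its vanishing for all `A` is equivalent to `[γ, u₀∧u₁∧u₂] = 0` in `𝔤₀ = gl(V)`,
since `trace([γ,γ']∘A) = ⟨A·γ, γ'⟩` and the trace pairing on `gl(V)` is perfect. -/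
noncomputable def bracketPairing (u : Fin 3 → Dual k V) (A : Module.End k V) :
    ExteriorAlgebra k V →ₗ[k] k :=
  ExteriorAlgebra.liftAlternating
    (fun i => match i with
      | 3 => derivPairingForm u A
      | _ => 0)

set_option linter.unusedSectionVars false

namespace Stmt11

lemma detForm_eq (u : Fin 3 → Dual k V) (w : Fin 3 → V) :
    detForm u w = Matrix.det (Matrix.of fun j i => u i (w j)) := rfl

lemma detForm_apply (u : Fin 3 → Dual k V) (w : Fin 3 → V) :
    detForm u w = u 0 (w 0) * u 1 (w 1) * u 2 (w 2) - u 0 (w 0) * u 2 (w 1) * u 1 (w 2)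
      - u 1 (w 0) * u 0 (w 1) * u 2 (w 2) + u 1 (w 0) * u 2 (w 1) * u 0 (w 2)
      + u 2 (w 0) * u 0 (w 1) * u 1 (w 2) - u 2 (w 0) * u 1 (w 1) * u 0 (w 2) := by
  rw [detForm_eq, Matrix.det_fin_three]; rfl

lemma detForm_eq_zero (u : Fin 3 → Dual k V) (w : Fin 3 → V) (j : Fin 3)
    (h : ∀ i, u i (w j) = 0) : detForm u w = 0 := by
  rw [detForm_eq]
  exact Matrix.det_eq_zero_of_row_eq_zero j fun i => h i

lemma update_vec0 (a b c x : V) : Function.update ![a, b, c] 0 x = ![x, b, c] := by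
  funext j; fin_cases j <;> simp [Function.update]

lemma update_vec1 (a b c x : V) : Function.update ![a, b, c] 1 x = ![a, x, c] := by
  funext j; fin_cases j <;> simp [Function.update]

lemma update_vec2 (a b c x : V) : Function.update ![a, b, c] 2 x = ![a, b, x] := by
  funext j; fin_cases j <;> simp [Function.update]

lemma vec3_eta (w : Fin 3 → V) : w = ![w 0, w 1, w 2] := by
  funext j; fin_cases j <;> rfl

lemma iMulti_swap01 (a b c : V) :
    ιMulti k 3 ![a, b, c] = - ιMulti k 3 ![b, a, c] := by
  have h : ![b, a, c] ∘ Equiv.swap (0 : Fin 3) 1 = ![a, b, c] := by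
    funext j; fin_cases j <;> simp [Equiv.swap_apply_def]
  rw [← h, AlternatingMap.map_swap _ _ (by decide : (0 : Fin 3) ≠ 1)]

lemma iMulti_swap02 (a b c : V) :
    ιMulti k 3 ![a, b, c] = - ιMulti k 3 ![c, b, a] := by
  have h : ![c, b, a] ∘ Equiv.swap (0 : Fin 3) 2 = ![a, b, c] := by
    funext j; fin_cases j <;> simp [Equiv.swap_apply_def]
  rw [← h, AlternatingMap.map_swap _ _ (by decide : (0 : Fin 3) ≠ 2)]

lemma iMulti_swap12 (a b c : V) :
    ιMulti k 3 ![a, b, c] = - ιMulti k 3 ![a, c, b] := by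
  have h : ![a, c, b] ∘ Equiv.swap (1 : Fin 3) 2 = ![a, b, c] := by
    funext j; fin_cases j <;> simp [Equiv.swap_apply_def]
  rw [← h, AlternatingMap.map_swap _ _ (by decide : (1 : Fin 3) ≠ 2)]

lemma iMulti_smul0 (r : k) (a b c : V) :
    ιMulti k 3 ![r • a, b, c] = r • ιMulti k 3 ![a, b, c] := by
  have := (ιMulti k 3 (M := V)).map_update_smul ![a, b, c] 0 r a
  rwa [update_vec0, update_vec0] at this

lemma iMulti_smul1 (r : k) (a b c : V) :
    ιMulti k 3 ![a, r • b, c] = r • ιMulti k 3 ![a, b, c] := by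
  have := (ιMulti k 3 (M := V)).map_update_smul ![a, b, c] 1 r b
  rwa [update_vec1, update_vec1] at this

lemma iMulti_smul2 (r : k) (a b c : V) :
    ιMulti k 3 ![a, b, r • c] = r • ιMulti k 3 ![a, b, c] := by
  have := (ιMulti k 3 (M := V)).map_update_smul ![a, b, c] 2 r c
  rwa [update_vec2, update_vec2] at this


lemma derivPairingForm_apply (u : Fin 3 → Dual k V) (A : Module.End k V) (v : Fin 3 → V) :
    derivPairingForm u A v = ∑ l : Fin 3, detForm u (Function.update v l (A (v l))) := by
  show (∑ l : Fin 3, (detForm u).toMultilinearMap.compLinearMap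
      (fun m => if m = l then (A : V →ₗ[k] V) else LinearMap.id)) v = _
  rw [MultilinearMap.sum_apply]
  refine Finset.sum_congr rfl fun l _ => ?_
  rw [MultilinearMap.compLinearMap_apply]
  show detForm u (fun c => (if c = l then (A : V →ₗ[k] V) else LinearMap.id) (v c)) = _
  congr 1
  funext c
  by_cases hc : c = l
  · subst hc; simp
  · simp [hc, Function.update_of_ne hc]

lemma bp_wedge (u : Fin 3 → Dual k V) (A : Module.End k V) (v : Fin 3 → V) :
    bracketPairing u A (ιMulti k 3 v)
      = ∑ l : Fin 3, detForm u (Function.update v l (A (v l))) := by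
  rw [bracketPairing, liftAlternating_apply_ιMulti]
  exact derivPairingForm_apply u A v

lemma bp_vec (u : Fin 3 → Dual k V) (A : Module.End k V) (x y z : V) :
    bracketPairing u A (ιMulti k 3 ![x, y, z]) =
      detForm u ![A x, y, z] + detForm u ![x, A y, z] + detForm u ![x, y, A z] := by
  rw [bp_wedge, Fin.sum_univ_three]
  simp only [Matrix.cons_val_zero, Matrix.cons_val_one, Matrix.head_cons,
    Matrix.cons_val_two, Matrix.tail_cons, update_vec0, update_vec1, update_vec2]


noncomputable def wedgeRight (f : Fin 3 → V) (p q : Fin 3) : V →ₗ[k] ExteriorAlgebra k V where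
  toFun x := ιMulti k 3 ![x, f p, f q]
  map_add' x y := by
    have := (ιMulti k 3 (M := V)).map_update_add ![x, f p, f q] 0 x y
    rwa [update_vec0, update_vec0, update_vec0] at this
  map_smul' r x := by
    have := (ιMulti k 3 (M := V)).map_update_smul ![x, f p, f q] 0 r x
    rwa [update_vec0, update_vec0] at this

lemma wedgeRight_apply (f : Fin 3 → V) (p q : Fin 3) (x : V) :
    wedgeRight f p q x = ιMulti k 3 ![x, f p, f q] := rfl

noncomputable def bigS (U : Submodule k V) (f : Fin 3 → V) :
    Submodule k (ExteriorAlgebra k V) :=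
  Submodule.span k {x | ∃ v : Fin 3 → V, v 0 ∈ U ∧ v 1 ∈ U ∧ x = ιMulti k 3 v}
    ⊔ U.map (wedgeRight f 0 1) ⊔ U.map (wedgeRight f 0 2) ⊔ U.map (wedgeRight f 1 2)
    ⊔ Submodule.span k {ιMulti k 3 ![f 0, f 1, f 2]}

variable {U : Submodule k V} {f : Fin 3 → V}

lemma memW {w' : Fin 3 → V} (h0 : w' 0 ∈ U) (h1 : w' 1 ∈ U) :
    ιMulti k 3 w' ∈ bigS U f := by
  refine Submodule.mem_sup_left (Submodule.mem_sup_left (Submodule.mem_sup_left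
    (Submodule.mem_sup_left (Submodule.subset_span ⟨w', h0, h1, rfl⟩))))

lemma memPair {x : V} (hx : x ∈ U) (p q : Fin 3) (hpq : p ≠ q) :
    ιMulti k 3 ![x, f p, f q] ∈ bigS U f := by
  have h01 : ιMulti k 3 ![x, f 0, f 1] ∈ bigS U f :=
    Submodule.mem_sup_left (Submodule.mem_sup_left (Submodule.mem_sup_left
      (Submodule.mem_sup_right ⟨x, hx, rfl⟩)))
  have h02 : ιMulti k 3 ![x, f 0, f 2] ∈ bigS U f :=
    Submodule.mem_sup_left (Submodule.mem_sup_left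
      (Submodule.mem_sup_right ⟨x, hx, rfl⟩))
  have h12 : ιMulti k 3 ![x, f 1, f 2] ∈ bigS U f :=
    Submodule.mem_sup_left (Submodule.mem_sup_right ⟨x, hx, rfl⟩)
  fin_cases p <;> fin_cases q <;>
    first
      | exact absurd rfl hpq
      | exact h01
      | exact h02
      | exact h12
      | (rw [iMulti_swap12]; exact neg_mem h01)
      | (rw [iMulti_swap12]; exact neg_mem h02)
      | (rw [iMulti_swap12]; exact neg_mem h12)

lemma memB : ∀ i0 i1 i2 : Fin 3, ιMulti k 3 ![f i0, f i1, f i2] ∈ bigS U f := by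
  have hb : ιMulti k 3 ![f 0, f 1, f 2] ∈ bigS U f :=
    Submodule.mem_sup_right (Submodule.subset_span rfl)
  intro i0 i1 i2
  by_cases h01 : i0 = i1
  · subst h01
    rw [AlternatingMap.map_eq_zero_of_eq _ ![f i0, f i0, f i2]
      (show ![f i0, f i0, f i2] 0 = ![f i0, f i0, f i2] 1 from rfl)
      (by decide : (0 : Fin 3) ≠ 1)]
    exact zero_mem _
  by_cases h02 : i0 = i2
  · subst h02
    rw [AlternatingMap.map_eq_zero_of_eq _ ![f i0, f i1, f i0]
      (show ![f i0, f i1, f i0] 0 = ![f i0, f i1, f i0] 2 from rfl)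
      (by decide : (0 : Fin 3) ≠ 2)]
    exact zero_mem _
  by_cases h12 : i1 = i2
  · subst h12
    rw [AlternatingMap.map_eq_zero_of_eq _ ![f i0, f i1, f i1]
      (show ![f i0, f i1, f i1] 1 = ![f i0, f i1, f i1] 2 from rfl)
      (by decide : (1 : Fin 3) ≠ 2)]
    exact zero_mem _
  fin_cases i0 <;> fin_cases i1 <;> fin_cases i2 <;>
    first
      | exact absurd rfl h01
      | exact absurd rfl h02
      | exact absurd rfl h12
      | exact hb
      | (rw [iMulti_swap12]; exact neg_mem hb)
      | (rw [iMulti_swap01]; exact neg_mem hb)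
      | (rw [iMulti_swap02]; exact neg_mem hb)
      | (rw [iMulti_swap02, iMulti_swap12]; simpa using hb)
      | (rw [iMulti_swap02, iMulti_swap01]; simpa using hb)

lemma helperH (a b c : V)
    (ha : a ∈ U ∨ ∃ (s : k) (i : Fin 3), a = s • f i)
    (hb : b ∈ U ∨ ∃ (s : k) (i : Fin 3), b = s • f i)
    (hc : c ∈ U ∨ ∃ (s : k) (i : Fin 3), c = s • f i) :
    ιMulti k 3 ![a, b, c] ∈ bigS U f := by
  rcases ha with ha | ⟨s0, i0, rfl⟩
  · rcases hb with hb | ⟨s1, i1, rfl⟩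
    · exact memW ha hb
    · rcases hc with hc | ⟨s2, i2, rfl⟩
      · rw [iMulti_swap12]
        exact neg_mem (memW ha hc)
      · rw [iMulti_smul1, iMulti_smul2]
        refine Submodule.smul_mem _ _ (Submodule.smul_mem _ _ ?_)
        by_cases hii : i1 = i2
        · subst hii
          rw [AlternatingMap.map_eq_zero_of_eq _ ![a, f i1, f i1]
            (show ![a, f i1, f i1] 1 = ![a, f i1, f i1] 2 from rfl)
            (by decide : (1 : Fin 3) ≠ 2)]
          exact zero_mem _
        · exact memPair ha i1 i2 hii
  · rcases hb with hb | ⟨s1, i1, rfl⟩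
    · rcases hc with hc | ⟨s2, i2, rfl⟩
      · rw [iMulti_swap02]
        exact neg_mem (memW hc hb)
      · rw [iMulti_smul0, iMulti_smul2]
        refine Submodule.smul_mem _ _ (Submodule.smul_mem _ _ ?_)
        rw [iMulti_swap01]
        refine neg_mem ?_
        by_cases hii : i0 = i2
        · subst hii
          rw [AlternatingMap.map_eq_zero_of_eq _ ![b, f i0, f i0]
            (show ![b, f i0, f i0] 1 = ![b, f i0, f i0] 2 from rfl)
            (by decide : (1 : Fin 3) ≠ 2)]
          exact zero_mem _
        · exact memPair hb i0 i2 hii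
    · rcases hc with hc | ⟨s2, i2, rfl⟩
      · rw [iMulti_smul0, iMulti_smul1]
        refine Submodule.smul_mem _ _ (Submodule.smul_mem _ _ ?_)
        rw [iMulti_swap02]
        refine neg_mem ?_
        by_cases hii : i1 = i0
        · subst hii
          rw [AlternatingMap.map_eq_zero_of_eq _ ![c, f i1, f i1]
            (show ![c, f i1, f i1] 1 = ![c, f i1, f i1] 2 from rfl)
            (by decide : (1 : Fin 3) ≠ 2)]
          exact zero_mem _
        · exact memPair hc i1 i0 hii
      · rw [iMulti_smul0, iMulti_smul1, iMulti_smul2]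
        exact Submodule.smul_mem _ _ (Submodule.smul_mem _ _
          (Submodule.smul_mem _ _ (memB i0 i1 i2)))


lemma pow3_le (u : Fin 3 → Dual k V)
    (hker : ∀ v : V, (∀ i, u i v = 0) → v ∈ U)
    (hf : ∀ i j, u i (f j) = if i = j then (1 : k) else 0) :
    (⋀[k]^3 V : Submodule k (ExteriorAlgebra k V)) ≤ bigS U f := by
  rw [← ιMulti_span_fixedDegree, Submodule.span_le]
  rintro x ⟨v, rfl⟩
  set p : Fin 3 → V := fun j => v j - ∑ i : Fin 3, u i (v j) • f i with hp
  have hpU : ∀ j, p j ∈ U := by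
    intro j
    refine hker _ fun m => ?_
    simp only [hp, map_sub, map_sum, map_smul, smul_eq_mul, hf, mul_ite, mul_one, mul_zero]
    rw [Finset.sum_ite_eq]
    simp
  have hv : v = fun j => ∑ t : Fin 4, Fin.cons (α := fun _ => V) (p j) (fun i : Fin 3 => u i (v j) • f i) t := by
    funext j
    rw [Fin.sum_univ_succ]
    simp only [Fin.cons_zero, Fin.cons_succ, hp]
    abel
  have hexp : ιMulti k 3 v = ∑ r : Fin 3 → Fin 4,
      ιMulti k 3 (fun j => Fin.cons (α := fun _ => V) (p j) (fun i : Fin 3 => u i (v j) • f i) (r j)) := by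
    conv_lhs => rw [hv]
    exact (ιMulti k 3 (M := V)).toMultilinearMap.map_sum
      (g := fun j t => Fin.cons (α := fun _ => V) (p j) (fun i : Fin 3 => u i (v j) • f i) t)
  rw [hexp]
  refine Submodule.sum_mem _ fun r _ => ?_
  have hslot : ∀ j : Fin 3,
      Fin.cons (α := fun _ => V) (p j) (fun i : Fin 3 => u i (v j) • f i) (r j) ∈ U ∨
      ∃ (s : k) (i : Fin 3),
        Fin.cons (α := fun _ => V) (p j) (fun i : Fin 3 => u i (v j) • f i) (r j) = s • f i := by
    intro j
    rcases Fin.eq_zero_or_eq_succ (r j) with h | ⟨t, h⟩ <;> rw [h]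
    · exact Or.inl (by rw [Fin.cons_zero]; exact hpU j)
    · exact Or.inr ⟨u t (v j), t, by rw [Fin.cons_succ]⟩
  rw [vec3_eta (fun j => Fin.cons (α := fun _ => V) (p j) (fun i : Fin 3 => u i (v j) • f i) (r j))]
  exact helperH _ _ _ (hslot 0) (hslot 1) (hslot 2)


lemma lemA (u : Fin 3 → Dual k V) (huU : ∀ i, ∀ x ∈ U, u i x = 0)
    (A : Module.End k V) {x : ExteriorAlgebra k V}
    (hx : x ∈ Submodule.span k
      {x | ∃ v : Fin 3 → V, v 0 ∈ U ∧ v 1 ∈ U ∧ x = ιMulti k 3 v}) :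
    bracketPairing u A x = 0 := by
  induction hx using Submodule.span_induction with
  | mem y hy =>
    obtain ⟨v, hv0, hv1, rfl⟩ := hy
    rw [bp_wedge, Fin.sum_univ_three]
    have h0 : detForm u (Function.update v 0 (A (v 0))) = 0 := by
      refine detForm_eq_zero u _ 1 fun i => ?_
      rw [Function.update_of_ne (by decide)]
      exact huU i _ hv1
    have h1 : detForm u (Function.update v 1 (A (v 1))) = 0 := by
      refine detForm_eq_zero u _ 0 fun i => ?_
      rw [Function.update_of_ne (by decide)]
      exact huU i _ hv0
    have h2 : detForm u (Function.update v 2 (A (v 2))) = 0 := by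
      refine detForm_eq_zero u _ 0 fun i => ?_
      rw [Function.update_of_ne (by decide)]
      exact huU i _ hv0
    rw [h0, h1, h2]; ring
  | zero => simp
  | add y z _ _ hy hz => rw [map_add, hy, hz, add_zero]
  | smul c y _ hy => rw [map_smul, hy, smul_zero]

lemma exists_dualfam (u : Fin 3 → Dual k V) (hu : LinearIndependent k u) :
    ∃ f : Fin 3 → V, ∀ i j, u i (f j) = if i = j then (1 : k) else 0 := by
  have hsurj : Function.Surjective (LinearMap.pi u) := by
    by_contra hns
    rw [← LinearMap.range_eq_top] at hns
    obtain ⟨φ, hφ0, hle⟩ := (LinearMap.range (LinearMap.pi u)).exists_le_ker_of_lt_top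
      (lt_top_iff_ne_top.mpr hns)
    have key : ∀ x : Fin 3 → k, φ x = ∑ i : Fin 3, x i * φ (Pi.single i 1) := by
      intro x
      conv_lhs => rw [← Finset.univ_sum_single x]
      rw [map_sum]
      refine Finset.sum_congr rfl fun i _ => ?_
      have : Pi.single i (x i) = x i • (Pi.single i 1 : Fin 3 → k) := by
        funext m
        simp [Pi.single_apply]
      rw [this, map_smul, smul_eq_mul]
    have hcomb : ∑ i : Fin 3, φ (Pi.single i 1) • u i = 0 := by
      ext v
      have hm : φ (LinearMap.pi u v) = 0 := hle (LinearMap.mem_range_self _ v)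
      rw [key] at hm
      simpa [mul_comm] using hm
    have hz := Fintype.linearIndependent_iff.mp hu (fun i => φ (Pi.single i 1)) hcomb
    apply hφ0
    refine LinearMap.ext fun x => ?_
    rw [key]
    simp [hz]
  choose g hg using fun j => hsurj (Pi.single j (1 : k))
  refine ⟨g, fun i j => ?_⟩
  have := congrFun (hg j) i
  rw [LinearMap.pi_apply] at this
  rw [this, Pi.single_apply]

end Stmt11

/-- Let `V₈` be 8-dimensional, `U ⊂ V₈` a 5-dimensional subspace, and
`u₀, u₁, u₂` a basis of `(V₈/U)^*` (linearly independent functionals vanishing on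
`U`), giving `γ' = u₀ ∧ u₁ ∧ u₂ ∈ ⋀³V₈^*`.  For `γ ∈ ⋀³V₈`, the bracket
`[γ, γ'] ∈ gl(V₈)` (of the `ℤ`-grading of `e₈` with `𝔤₋₁ = ⋀³V₈^*`, `𝔤₀ = gl(V₈)`,
`𝔤₁ = ⋀³V₈`) vanishes — equivalently, `⟨A·γ, γ'⟩ = 0` for every `A ∈ gl(V₈)` —
if and only if `γ ∈ ⋀³U + ⋀²U ∧ V₈`. -/
theorem stmt_11 [FiniteDimensional k V] (hV : Module.finrank k V = 8)
    (U : Submodule k V) (hU : Module.finrank k U = 5)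
    (u : Fin 3 → Dual k V) (hu : LinearIndependent k u)
    (huU : ∀ i, ∀ x ∈ U, u i x = 0)
    (γ : ExteriorAlgebra k V) (hγ : γ ∈ ⋀[k]^3 V) :
    (∀ A : Module.End k V, bracketPairing u A γ = 0) ↔
      γ ∈ Submodule.span k
        {x | ∃ v : Fin 3 → V, v 0 ∈ U ∧ v 1 ∈ U ∧ x = ιMulti k 3 v} := by
  classical
  obtain ⟨f, hf⟩ := Stmt11.exists_dualfam u hu
  constructor
  swap
  · intro hmem A
    exact Stmt11.lemA u huU A hmem
  intro hA
  have hUker : U ≤ LinearMap.ker (LinearMap.pi u) := by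
    intro v hv
    rw [LinearMap.mem_ker]
    funext i
    simpa using huU i v hv
  have hrange : LinearMap.range (LinearMap.pi u) = ⊤ := by
    rw [eq_top_iff]
    intro x _
    refine ⟨∑ j : Fin 3, x j • f j, ?_⟩
    funext i
    simp only [LinearMap.pi_apply, map_sum, map_smul, smul_eq_mul, hf, mul_ite, mul_one,
      mul_zero]
    rw [Finset.sum_ite_eq]
    simp
  have h3 : Module.finrank k (Fin 3 → k) = 3 := by simp
  have hker5 : Module.finrank k (LinearMap.ker (LinearMap.pi u)) = 5 := by
    have h1 := LinearMap.finrank_range_add_finrank_ker (LinearMap.pi u)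
    rw [hrange, finrank_top, h3, hV] at h1
    omega
  have hUeq : U = LinearMap.ker (LinearMap.pi u) :=
    Submodule.eq_of_le_of_finrank_le hUker (by rw [hker5, hU])
  have hker : ∀ v : V, (∀ i, u i v = 0) → v ∈ U := by
    intro v hv
    rw [hUeq, LinearMap.mem_ker]
    funext i
    simpa using hv i
  have hγS := Stmt11.pow3_le u hker hf hγ
  unfold Stmt11.bigS at hγS
  obtain ⟨y4, hy4, zb, hzb, rfl⟩ := Submodule.mem_sup.mp hγS
  obtain ⟨t, rfl⟩ := Submodule.mem_span_singleton.mp hzb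
  obtain ⟨y3, hy3, z3, hz3, rfl⟩ := Submodule.mem_sup.mp hy4
  obtain ⟨c, hcU, rfl⟩ := hz3
  obtain ⟨y2, hy2, z2, hz2, rfl⟩ := Submodule.mem_sup.mp hy3
  obtain ⟨b, hbU, rfl⟩ := hz2
  obtain ⟨w, hw, z1, hz1, rfl⟩ := Submodule.mem_sup.mp hy2
  obtain ⟨a, haU, rfl⟩ := hz1
  -- evaluation lemmas
  have hfU : ∀ (A : Module.End k V) (x : V), x ∈ U → ∀ p q : Fin 3,
      bracketPairing u A (ιMulti k 3 ![x, f p, f q]) = detForm u ![A x, f p, f q] := by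
    intro A x hx p q
    rw [Stmt11.bp_vec]
    have h1 : detForm u ![x, A (f p), f q] = 0 :=
      Stmt11.detForm_eq_zero u _ 0 fun i => huU i x hx
    have h2 : detForm u ![x, f p, A (f q)] = 0 :=
      Stmt11.detForm_eq_zero u _ 0 fun i => huU i x hx
    rw [h1, h2, add_zero, add_zero]
  have hval : ∀ (φ : Dual k V) (m : Fin 3) (x : V), x ∈ U → ∀ p q : Fin 3,
      bracketPairing u (φ.smulRight (f m)) (ιMulti k 3 ![x, f p, f q])
        = φ x * detForm u ![f m, f p, f q] := by
    intro φ m x hx p q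
    rw [hfU _ x hx]
    rw [Stmt11.detForm_apply, Stmt11.detForm_apply]
    simp only [Matrix.cons_val_zero, Matrix.cons_val_one, Matrix.head_cons,
      Matrix.cons_val_two, Matrix.tail_cons, LinearMap.smulRight_apply, map_smul,
      smul_eq_mul]
    ring
  have hdet : ∀ m p q : Fin 3, detForm u ![f m, f p, f q] =
      (if m = 0 then if p = 1 ∧ q = 2 then 1 else if p = 2 ∧ q = 1 then -1 else 0
       else if m = 1 then if p = 0 ∧ q = 2 then -1 else if p = 2 ∧ q = 0 then 1 else 0
       else if p = 0 ∧ q = 1 then 1 else if p = 1 ∧ q = 0 then -1 else 0 : k) := by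
    intro m p q
    rw [Stmt11.detForm_apply]
    simp only [Matrix.cons_val_zero, Matrix.cons_val_one, Matrix.head_cons,
      Matrix.cons_val_two, Matrix.tail_cons, hf]
    fin_cases m <;> fin_cases p <;> fin_cases q <;> norm_num [Fin.ext_iff]
  -- step 1 : t = 0
  have ht : t = 0 := by
    have h := hA ((u 0).smulRight (f 0))
    rw [map_add, map_add, map_add, map_add, map_smul] at h
    rw [Stmt11.lemA u huU _ hw] at h
    rw [Stmt11.wedgeRight_apply, Stmt11.wedgeRight_apply, Stmt11.wedgeRight_apply] at h
    rw [hfU _ a haU, hfU _ b hbU, hfU _ c hcU] at h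
    have ea : ((u 0).smulRight (f 0)) a = (0 : V) := by
      rw [LinearMap.smulRight_apply, huU 0 a haU, zero_smul]
    have eb : ((u 0).smulRight (f 0)) b = (0 : V) := by
      rw [LinearMap.smulRight_apply, huU 0 b hbU, zero_smul]
    have ec : ((u 0).smulRight (f 0)) c = (0 : V) := by
      rw [LinearMap.smulRight_apply, huU 0 c hcU, zero_smul]
    rw [ea, eb, ec] at h
    have hz0 : ∀ p q : Fin 3, detForm u ![(0 : V), f p, f q] = 0 := fun p q =>
      Stmt11.detForm_eq_zero u _ 0 fun i => by simp
    rw [hz0, hz0, hz0] at h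
    have hbβ : bracketPairing u ((u 0).smulRight (f 0)) (ιMulti k 3 ![f 0, f 1, f 2])
        = 1 := by
      rw [Stmt11.bp_vec, Stmt11.detForm_apply, Stmt11.detForm_apply, Stmt11.detForm_apply]
      simp only [Matrix.cons_val_zero, Matrix.cons_val_one, Matrix.head_cons,
        Matrix.cons_val_two, Matrix.tail_cons, LinearMap.smulRight_apply, map_smul,
        smul_eq_mul, hf]
      norm_num [Fin.ext_iff]
    rw [hbβ] at h
    simpa using h
  subst ht
  -- step 2 : a = b = c = 0
  have hstep : ∀ (m : Fin 3) (φ : Dual k V),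
      bracketPairing u (φ.smulRight (f m))
        (w + Stmt11.wedgeRight f 0 1 a + Stmt11.wedgeRight f 0 2 b
          + Stmt11.wedgeRight f 1 2 c + (0 : k) • ιMulti k 3 ![f 0, f 1, f 2])
      = φ a * detForm u ![f m, f 0, f 1] + φ b * detForm u ![f m, f 0, f 2]
        + φ c * detForm u ![f m, f 1, f 2] := by
    intro m φ
    rw [map_add, map_add, map_add, map_add, map_smul]
    rw [Stmt11.lemA u huU _ hw]
    rw [Stmt11.wedgeRight_apply, Stmt11.wedgeRight_apply, Stmt11.wedgeRight_apply]
    rw [hval φ m a haU, hval φ m b hbU, hval φ m c hcU]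
    simp
  have ha0 : a = 0 := by
    rw [← forall_dual_apply_eq_zero_iff k a]
    intro φ
    have h := hA (φ.smulRight (f 2))
    rw [hstep 2 φ] at h
    rw [hdet 2 0 1, hdet 2 0 2, hdet 2 1 2] at h
    simpa using h
  have hb0 : b = 0 := by
    rw [← forall_dual_apply_eq_zero_iff k b]
    intro φ
    have h := hA (φ.smulRight (f 1))
    rw [hstep 1 φ] at h
    rw [hdet 1 0 1, hdet 1 0 2, hdet 1 1 2] at h
    simpa using h
  have hc0 : c = 0 := by
    rw [← forall_dual_apply_eq_zero_iff k c]
    intro φ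
    have h := hA (φ.smulRight (f 0))
    rw [hstep 0 φ] at h
    rw [hdet 0 0 1, hdet 0 0 2, hdet 0 1 2] at h
    simpa using h
  subst ha0
  subst hb0
  subst hc0
  simpa using hw
end
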